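/- Let (X, F) be an expansive upper semicontinuous set-valued system on a compact totally disconnected Hausdorff space X. If F has the set-valued shadowing property, then the orbit system (Orb_F(X), σ_F) is conjugate, as a single-valued dynamical system, to a subshift of finite type. -/

import Mathlib

open Set Filter Metric Topology

section Defs

variable {X : Type*} [TopologicalSpace X]

/-- A finite open cover of `X`. -/
def IsFOC (U : Set (Set X)) : Prop :=
  U.Finite ∧ (∀ V ∈ U, IsOpen V) ∧ ⋃₀ U = Set.univ

/-- Upper semicontinuity for set-valued maps. -/
def USCSV (F : X → Set X) : Prop :=
  ∀ x : X, ∀ U : Set X, IsOpen U → F x ⊆ U →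
    ∃ V : Set X, IsOpen V ∧ x ∈ V ∧ ∀ y ∈ V, F y ⊆ U

/-- Lower semicontinuity for set-valued maps. -/
def LSCSV (F : X → Set X) : Prop :=
  ∀ x : X, ∀ U : Set X, IsOpen U → (F x ∩ U).Nonempty →
    ∃ V : Set X, IsOpen V ∧ x ∈ V ∧ ∀ y ∈ V, (F y ∩ U).Nonempty

/-- An `F`-orbit. -/
def IsSVOrbit (F : X → Set X) (z : ℕ → X) : Prop := ∀ i, z (i + 1) ∈ F (z i)

/-- The orbit space of a set-valued system. -/
def svOrbitSet (F : X → Set X) : Set (ℕ → X) := {w | ∀ i, w (i + 1) ∈ F (w i)}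

/-- A `𝒱`-pseudo-orbit of the set-valued map `F`. -/
def IsSVPseudoOrbit (F : X → Set X) (V : Set (Set X)) (x : ℕ → X) : Prop :=
  ∀ i, ∃ W ∈ V, (F (x i) ∩ W).Nonempty ∧ x (i + 1) ∈ W

/-- `x` is `𝒰`-shadowed by `z`. -/
def ShadowedBy (U : Set (Set X)) (x z : ℕ → X) : Prop :=
  ∀ i, ∃ W ∈ U, x i ∈ W ∧ z i ∈ W

/-- The set-valued shadowing property (finite open cover version). -/
def SVShadowing (F : X → Set X) : Prop :=
  ∀ U : Set (Set X), IsFOC U → ∃ V : Set (Set X), IsFOC V ∧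
    ∀ x : ℕ → X, IsSVPseudoOrbit F V x →
      ∃ z : ℕ → X, IsSVOrbit F z ∧ ShadowedBy U x z

/-- Inverse image of a set under a set-valued map: `F⁻¹(A) = {x | F x ∩ A ≠ ∅}`. -/
def Finv (F : X → Set X) (A : Set X) : Set X := {x | (F x ∩ A).Nonempty}

/-- The `n`-tuple orbital discriminant `[U_0, …, U_n]`. -/
def tupleDisc (F : X → Set X) : ℕ → (ℕ → Set X) → Set X
  | 0, U => U 0
  | n + 1, U => U 0 ∩ Finv F (tupleDisc F n fun i => U (i + 1))

/-- The orbital discriminant `[U_i] = ⋂ₙ [U_0, …, U_n]`. -/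
def seqDisc (F : X → Set X) (U : ℕ → Set X) : Set X := ⋂ n, tupleDisc F n U

end Defs

/-- Expansiveness of a set-valued map with respect to the uniformity. -/
def ExpansiveSV {X : Type*} [UniformSpace X] (F : X → Set X) : Prop :=
  ∃ δ ∈ uniformity X, ∀ x y : ℕ → X, IsSVOrbit F x → IsSVOrbit F y →
    (∀ i, (x i, y i) ∈ δ) → x 0 = y 0

/-- The word `u` occurs in the sequence `w` at position `k`. -/
def OccursIn {S : Type*} (u : List S) (w : ℕ → S) (k : ℕ) : Prop :=
  ∀ j : Fin u.length, w (k + (j : ℕ)) = u.get j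

/-- The subshift of finite type determined by the finite forbidden word set `W`. -/
def SFT {S : Type*} (W : Set (List S)) : Set (ℕ → S) :=
  {w | ∀ u ∈ W, ∀ k : ℕ, ¬ OccursIn u w k}

set_option linter.unusedSectionVars false
section AuxLemmas


section Aux

variable {X : Type*} [TopologicalSpace X] {F : X → Set X}

/-- Extend a point to a full orbit. -/
lemma exists_orbit_start (hFne : ∀ x, (F x).Nonempty) (x : X) :
    ∃ w : ℕ → X, IsSVOrbit F w ∧ w 0 = x := by
  classical
  let w : ℕ → X := fun n => Nat.rec x (fun _ p => (hFne p).choose) n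
  refine ⟨w, fun i => ?_, rfl⟩
  exact (hFne (w i)).choose_spec

/-- The graph of a usc compact-valued map on a compact Hausdorff space is closed. -/
lemma graph_closed [T2Space X] (hFcpt : ∀ x, IsCompact (F x)) (hFusc : USCSV F) :
    IsClosed {p : X × X | p.2 ∈ F p.1} := by
  rw [← isOpen_compl_iff]
  rw [isOpen_iff_forall_mem_open]
  rintro ⟨x, y⟩ hxy
  simp only [mem_compl_iff, mem_setOf_eq] at hxy
  obtain ⟨U, Vy, hU, hVy, hFU, hyV, hUV⟩ :=
    SeparatedNhds.of_isCompact_isCompact (hFcpt x) isCompact_singleton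
      (disjoint_singleton_right.2 hxy)
  obtain ⟨N, hN, hxN, hNU⟩ := hFusc x U hU hFU
  refine ⟨N ×ˢ Vy, ?_, hN.prod hVy, ⟨hxN, hyV rfl⟩⟩
  rintro ⟨a, b⟩ ⟨ha, hb⟩ hab
  exact absurd (hUV.le_bot ⟨hNU a ha hab, hb⟩) (by simp)

lemma Finv_mono {A B : Set X} (h : A ⊆ B) : Finv F A ⊆ Finv F B :=
  fun _ ⟨y, hy1, hy2⟩ => ⟨y, hy1, h hy2⟩

lemma Finv_isClosed [CompactSpace X] [T2Space X] (hgr : IsClosed {p : X × X | p.2 ∈ F p.1})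
    {A : Set X} (hA : IsClosed A) : IsClosed (Finv F A) := by
  have : Finv F A = Prod.fst '' ({p : X × X | p.2 ∈ F p.1} ∩ (univ ×ˢ A)) := by
    ext x
    constructor
    · rintro ⟨y, hy1, hy2⟩; exact ⟨(x, y), ⟨hy1, ⟨trivial, hy2⟩⟩, rfl⟩
    · rintro ⟨⟨a, b⟩, ⟨h1, ⟨-, h2⟩⟩, rfl⟩; exact ⟨b, h1, h2⟩
  rw [this]
  have hcpt : IsCompact ({p : X × X | p.2 ∈ F p.1} ∩ (univ ×ˢ A)) :=
    (hgr.inter (isClosed_univ.prod hA)).isCompact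
  exact (hcpt.image continuous_fst).isClosed

lemma tupleDisc_isClosed [CompactSpace X] [T2Space X] (hgr : IsClosed {p : X × X | p.2 ∈ F p.1}) :
    ∀ (n : ℕ) (U : ℕ → Set X), (∀ i, IsClosed (U i)) → IsClosed (tupleDisc F n U) := by
  intro n
  induction n with
  | zero => intro U hU; exact hU 0
  | succ n ih =>
    intro U hU
    exact (hU 0).inter (Finv_isClosed hgr (ih _ fun i => hU (i + 1)))

lemma tupleDisc_congr : ∀ (n : ℕ) (U U' : ℕ → Set X), (∀ i ≤ n, U i = U' i) →
    tupleDisc F n U = tupleDisc F n U' := by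
  intro n
  induction n with
  | zero => intro U U' h; exact h 0 le_rfl
  | succ n ih =>
    intro U U' h
    show U 0 ∩ _ = U' 0 ∩ _
    rw [h 0 (Nat.zero_le _), ih (fun i => U (i + 1)) (fun i => U' (i + 1))
      (fun i hi => h (i + 1) (Nat.succ_le_succ hi))]

lemma tupleDisc_succ_subset : ∀ (n : ℕ) (U : ℕ → Set X),
    tupleDisc F (n + 1) U ⊆ tupleDisc F n U := by
  intro n
  induction n with
  | zero => intro U; exact inter_subset_left
  | succ n ih =>
    intro U
    exact inter_subset_inter le_rfl (Finv_mono (ih _))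

lemma tupleDisc_anti {m n : ℕ} (h : m ≤ n) (U : ℕ → Set X) :
    tupleDisc F n U ⊆ tupleDisc F m U := by
  induction n with
  | zero => simp_all
  | succ n ih =>
    rcases Nat.eq_or_lt_of_le h with rfl | h'
    · exact le_rfl
    · exact (tupleDisc_succ_subset n U).trans (ih (Nat.lt_succ_iff.mp h'))

/-- A finite orbit segment through the sets `U i` witnesses membership in `tupleDisc`. -/
lemma chain_mem_tupleDisc : ∀ (n : ℕ) (U : ℕ → Set X) (w : ℕ → X),
    (∀ i < n, w (i + 1) ∈ F (w i)) → (∀ i ≤ n, w i ∈ U i) → w 0 ∈ tupleDisc F n U := by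
  intro n
  induction n with
  | zero => intro U w _ h; exact h 0 le_rfl
  | succ n ih =>
    intro U w hch hmem
    refine ⟨hmem 0 (Nat.zero_le _), w 1, hch 0 (Nat.succ_pos _), ?_⟩
    exact ih (fun i => U (i + 1)) (fun i => w (i + 1))
      (fun i hi => hch (i + 1) (Nat.succ_lt_succ hi))
      (fun i hi => hmem (i + 1) (Nat.succ_le_succ hi))

lemma exists_orbit_of_mem_tupleDisc (hFne : ∀ x, (F x).Nonempty) :
    ∀ (n : ℕ) (U : ℕ → Set X) (x : X), x ∈ tupleDisc F n U →
    ∃ w : ℕ → X, IsSVOrbit F w ∧ w 0 = x ∧ ∀ i ≤ n, w i ∈ U i := by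
  intro n
  induction n with
  | zero =>
    intro U x hx
    obtain ⟨w, hw, hw0⟩ := exists_orbit_start hFne x
    refine ⟨w, hw, hw0, fun i hi => ?_⟩
    obtain rfl := Nat.le_zero.mp hi
    rw [hw0]; exact hx
  | succ n ih =>
    rintro U x ⟨hx0, y, hyF, hyT⟩
    obtain ⟨w', hw', hw'0, hw'mem⟩ := ih _ y hyT
    refine ⟨fun k => Nat.casesOn k x w', fun i => ?_, rfl, fun i hi => ?_⟩
    · cases i with
      | zero => simpa [hw'0]
      | succ i => exact hw' i
    · cases i with
      | zero => exact hx0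
      | succ i => exact hw'mem i (Nat.succ_le_succ_iff.mp hi)

lemma exists_orbit_of_mem_seqDisc [CompactSpace X] [T2Space X]
    (hFne : ∀ x, (F x).Nonempty) (hgr : IsClosed {p : X × X | p.2 ∈ F p.1})
    (U : ℕ → Set X) (hU : ∀ i, IsClosed (U i)) (x : X) (hx : x ∈ seqDisc F U) :
    ∃ w : ℕ → X, IsSVOrbit F w ∧ w 0 = x ∧ ∀ i, w i ∈ U i := by
  have hxT : ∀ n, x ∈ tupleDisc F n U := fun n => mem_iInter.mp hx n
  let A : ℕ → Set (ℕ → X) := fun n =>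
    {w | w 0 = x ∧ IsSVOrbit F w ∧ ∀ i ≤ n, w i ∈ U i}
  have hAcl : ∀ n, IsClosed (A n) := by
    intro n
    have h1 : IsClosed {w : ℕ → X | w 0 = x} :=
      isClosed_eq (continuous_apply 0) continuous_const
    have h2 : IsClosed {w : ℕ → X | IsSVOrbit F w} := by
      have : {w : ℕ → X | IsSVOrbit F w} =
          ⋂ i, (fun w : ℕ → X => (w i, w (i + 1))) ⁻¹' {p : X × X | p.2 ∈ F p.1} := by
        ext w; simp [IsSVOrbit, mem_iInter]
      rw [this]
      exact isClosed_iInter fun i =>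
        IsClosed.preimage ((continuous_apply i).prodMk (continuous_apply (i + 1))) hgr
    have h3 : IsClosed {w : ℕ → X | ∀ i ≤ n, w i ∈ U i} := by
      have : {w : ℕ → X | ∀ i ≤ n, w i ∈ U i} = ⋂ i, ⋂ (_ : i ≤ n), (fun w : ℕ → X => w i) ⁻¹' U i := by
        ext w; simp
      rw [this]
      exact isClosed_iInter fun i => isClosed_iInter fun _ => (hU i).preimage (continuous_apply i)
    exact h1.inter (h2.inter h3)
  have hAne : ∀ n, (A n).Nonempty := by
    intro n
    obtain ⟨w, hw, hw0, hwm⟩ := exists_orbit_of_mem_tupleDisc hFne n U x (hxT n)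
    exact ⟨w, hw0, hw, hwm⟩
  have hAdec : ∀ n, A (n + 1) ⊆ A n := by
    rintro n w ⟨h1, h2, h3⟩
    exact ⟨h1, h2, fun i hi => h3 i (hi.trans (Nat.le_succ n))⟩
  have := IsCompact.nonempty_iInter_of_sequence_nonempty_isCompact_isClosed A hAdec hAne
    ((hAcl 0).isCompact) hAcl
  obtain ⟨w, hw⟩ := this
  simp only [mem_iInter] at hw
  refine ⟨w, (hw 0).2.1, (hw 0).1, fun i => (hw i).2.2 i le_rfl⟩
end Aux

section Aux2

/-- A finite clopen partition subordinate to an entourage. -/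
lemma exists_small_partition {X : Type*} [UniformSpace X] [CompactSpace X] [T2Space X]
    [TotallyDisconnectedSpace X] {δ : Set (X × X)} (hδ : δ ∈ uniformity X) :
    ∃ (m : ℕ) (C : Fin m → Set X), (∀ j, IsClopen (C j)) ∧
      (∀ j k, j ≠ k → C j ∩ C k = ∅) ∧ (⋃ j, C j = univ) ∧ ∀ j, C j ×ˢ C j ⊆ δ := by
  classical
  obtain ⟨δ₀, hδ₀, hsymm, hcomp⟩ := comp_symm_mem_uniformity_sets hδ
  have hN : ∀ x : X, ∃ N : Set X, IsClopen N ∧ x ∈ N ∧ N ×ˢ N ⊆ δ := by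
    intro x
    have hball : UniformSpace.ball x δ₀ ∈ nhds x := UniformSpace.ball_mem_nhds x hδ₀
    obtain ⟨O, hOsub, hOopen, hxO⟩ := mem_nhds_iff.mp hball
    obtain ⟨N, hNclopen, hxN, hNO⟩ := compact_exists_isClopen_in_isOpen hOopen hxO
    refine ⟨N, hNclopen, hxN, ?_⟩
    rintro ⟨a, b⟩ ⟨ha, hb⟩
    have hxa : (x, a) ∈ δ₀ := hOsub (hNO ha)
    have hxb : (x, b) ∈ δ₀ := hOsub (hNO hb)
    exact hcomp ⟨x, hsymm.symm _ _ hxa, hxb⟩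
  choose N hNclopen hNmem hNsmall using hN
  obtain ⟨t, ht⟩ := isCompact_univ.elim_finite_subcover N
    (fun x => (hNclopen x).isOpen) (fun x _ => mem_iUnion.mpr ⟨x, hNmem x⟩)
  let e : Fin t.card ≃ {x // x ∈ t} := t.equivFin.symm
  let N' : Fin t.card → Set X := fun j => N (e j)
  have hN'clopen : ∀ j, IsClopen (N' j) := fun j => hNclopen _
  refine ⟨t.card, fun j => N' j \ ⋃ k, ⋃ (_ : k < j), N' k, fun j => ?_, ?_, ?_, fun j => ?_⟩
  · exact (hN'clopen j).diff ((Set.toFinite {k | k < j}).isClopen_biUnion fun k _ => hN'clopen k)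
  · intro j k hjk
    rw [Set.eq_empty_iff_forall_notMem]
    rintro x ⟨⟨hx1, hx2⟩, ⟨hx3, hx4⟩⟩
    rcases hjk.lt_or_gt with h | h
    · exact hx4 (mem_iUnion.mpr ⟨j, mem_iUnion.mpr ⟨h, hx1⟩⟩)
    · exact hx2 (mem_iUnion.mpr ⟨k, mem_iUnion.mpr ⟨h, hx3⟩⟩)
  · rw [Set.eq_univ_iff_forall]
    intro x
    have hx : x ∈ ⋃ y ∈ t, N y := ht (mem_univ x)
    obtain ⟨y, hyt, hxy⟩ := mem_iUnion₂.mp hx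
    have hne : (Finset.univ.filter (fun j => x ∈ N' j)).Nonempty := by
      refine ⟨e.symm ⟨y, hyt⟩, Finset.mem_filter.mpr ⟨Finset.mem_univ _, ?_⟩⟩
      show x ∈ N (e (e.symm ⟨y, hyt⟩))
      rw [Equiv.apply_symm_apply]
      exact hxy
    set j₀ := (Finset.univ.filter (fun j => x ∈ N' j)).min' hne with hj₀
    have hj₀mem : x ∈ N' j₀ :=
      (Finset.mem_filter.mp ((Finset.univ.filter (fun j => x ∈ N' j)).min'_mem hne)).2
    refine mem_iUnion.mpr ⟨j₀, hj₀mem, ?_⟩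
    intro hmem
    obtain ⟨k, hk⟩ := mem_iUnion.mp hmem
    obtain ⟨hklt, hxk⟩ := mem_iUnion.mp hk
    have : j₀ ≤ k := Finset.min'_le _ k (Finset.mem_filter.mpr ⟨Finset.mem_univ _, hxk⟩)
    exact absurd hklt (not_lt.mpr this)
  · exact fun p hp => hNsmall _ ⟨hp.1.1, hp.2.1⟩

end Aux2

section Aux3

open UniformSpace in
/-- The key uniformity lemma: some level of the tuple discriminant is absorbed by `V`. -/
lemma exists_uniform_n {X : Type*} [TopologicalSpace X] [CompactSpace X] [T2Space X] [Nonempty X]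
    {F : X → Set X} {ι : Type*} [Finite ι]
    (hFne : ∀ x, (F x).Nonempty) (hgr : IsClosed {p : X × X | p.2 ∈ F p.1})
    {δ : Set (X × X)}
    (hδ : ∀ x y : ℕ → X, IsSVOrbit F x → IsSVOrbit F y → (∀ i, (x i, y i) ∈ δ) → x 0 = y 0)
    (C : ι → Set X) (hCcl : ∀ j, IsClosed (C j)) (hCsmall : ∀ j, (C j) ×ˢ (C j) ⊆ δ)
    {V : Set (Set X)} (hVopen : ∀ W ∈ V, IsOpen W) (hVcover : ⋃₀ V = Set.univ) :
    ∃ n : ℕ, ∀ a : ℕ → ι, ∃ W ∈ V, tupleDisc F n (fun i => C (a i)) ⊆ W := by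
  classical
  have hsub : ∀ a : ℕ → ι, (seqDisc F (fun i => C (a i))).Subsingleton := by
    intro a x hx y hy
    obtain ⟨wx, hwx, hwx0, hwxm⟩ :=
      exists_orbit_of_mem_seqDisc hFne hgr _ (fun i => hCcl _) x hx
    obtain ⟨wy, hwy, hwy0, hwym⟩ :=
      exists_orbit_of_mem_seqDisc hFne hgr _ (fun i => hCcl _) y hy
    have := hδ wx wy hwx hwy (fun i => hCsmall (a i) ⟨hwxm i, hwym i⟩)
    rw [← hwx0, ← hwy0]; exact this
  have key : ∀ a : ℕ → ι, ∃ n, ∃ W ∈ V, tupleDisc F n (fun i => C (a i)) ⊆ W := by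
    intro a
    have hWex : ∃ W ∈ V, seqDisc F (fun i => C (a i)) ⊆ W := by
      rcases (seqDisc F (fun i => C (a i))).eq_empty_or_nonempty with he | ⟨x, hx⟩
      · obtain ⟨y⟩ := (inferInstance : Nonempty X)
        have : y ∈ ⋃₀ V := hVcover ▸ Set.mem_univ y
        obtain ⟨W, hWV, -⟩ := this
        exact ⟨W, hWV, by simp [he]⟩
      · have hxu : x ∈ ⋃₀ V := hVcover ▸ Set.mem_univ x
        obtain ⟨W, hWV, hxW⟩ := hxu
        exact ⟨W, hWV, fun y hy => (hsub a hy hx) ▸ hxW⟩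
    obtain ⟨W, hWV, hsw⟩ := hWex
    by_contra hcon
    push_neg at hcon
    have hne : ∀ n, (tupleDisc F n (fun i => C (a i)) \ W).Nonempty :=
      fun n => Set.diff_nonempty.mpr (hcon n W hWV)
    have hKcl : ∀ n, IsClosed (tupleDisc F n (fun i => C (a i)) \ W) := fun n =>
      (tupleDisc_isClosed hgr n _ (fun i => hCcl _)).inter (hVopen W hWV).isClosed_compl
    have hKdec : ∀ n, tupleDisc F (n + 1) (fun i => C (a i)) \ W ⊆
        tupleDisc F n (fun i => C (a i)) \ W :=
      fun n => Set.diff_subset_diff_left (tupleDisc_succ_subset n _)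
    obtain ⟨x, hx⟩ := IsCompact.nonempty_iInter_of_sequence_nonempty_isCompact_isClosed
      _ hKdec hne ((hKcl 0).isCompact) hKcl
    simp only [Set.mem_iInter, Set.mem_diff] at hx
    exact (hx 0).2 (hsw (Set.mem_iInter.mpr fun n => (hx n).1))
  choose nfun Wfun hWfunV hWfunsub using key
  letI : TopologicalSpace ι := ⊥
  haveI : DiscreteTopology ι := ⟨rfl⟩
  let Cyl : (ℕ → ι) → Set (ℕ → ι) := fun a => {b | ∀ i ≤ nfun a, b i = a i}
  have hCylopen : ∀ a, IsOpen (Cyl a) := by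
    intro a
    have : Cyl a = ⋂ i ∈ Finset.range (nfun a + 1), (fun b : ℕ → ι => b i) ⁻¹' {a i} := by
      ext b; simp [Cyl, Nat.lt_succ_iff]
    rw [this]
    exact isOpen_biInter_finset fun i _ =>
      (continuous_apply i).isOpen_preimage _ (isOpen_discrete _)
  obtain ⟨t, ht⟩ := isCompact_univ.elim_finite_subcover Cyl hCylopen
    (fun a _ => Set.mem_iUnion.mpr ⟨a, fun i _ => rfl⟩)
  refine ⟨t.sup nfun, fun a => ?_⟩
  have ha : a ∈ ⋃ a₀ ∈ t, Cyl a₀ := ht (Set.mem_univ a)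
  obtain ⟨a₀, ha₀t, ha₀⟩ := Set.mem_iUnion₂.mp ha
  refine ⟨Wfun a₀, hWfunV a₀, ?_⟩
  have h1 : tupleDisc F (t.sup nfun) (fun i => C (a i)) ⊆
      tupleDisc F (nfun a₀) (fun i => C (a i)) := tupleDisc_anti (Finset.le_sup ha₀t) _
  have h2 : tupleDisc F (nfun a₀) (fun i => C (a i)) =
      tupleDisc F (nfun a₀) (fun i => C (a₀ i)) :=
    tupleDisc_congr _ _ _ (fun i hi => by rw [ha₀ i hi])
  exact h1.trans (h2 ▸ hWfunsub a₀)

end Aux3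

lemma continuous_of_isEmpty {α β : Type*} [TopologicalSpace α] [TopologicalSpace β] [IsEmpty α]
    (f : α → β) : Continuous f := by
  rw [continuous_def]
  intro s _
  rw [Set.eq_empty_of_isEmpty (f ⁻¹' s)]
  exact isOpen_empty

end AuxLemmas

/-- Theorem 4.8: if an expansive usc set-valued system on a compact
totally disconnected Hausdorff space has the set-valued shadowing property, then its
orbit system is conjugate to a subshift of finite type. -/
theorem orbitSystem_conjugate_SFT_of_expansive_shadowing
    {X : Type*} [UniformSpace X] [CompactSpace X] [T2Space X] [TotallyDisconnectedSpace X]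
    (F : X → Set X)
    (hFne : ∀ x, (F x).Nonempty) (hFcpt : ∀ x, IsCompact (F x)) (hFusc : USCSV F)
    (hexp : ExpansiveSV F) (hshad : SVShadowing F) :
    ∃ S : Set ℕ, S.Finite ∧
      ∃ W : Set (List ↥S), W.Finite ∧
        ∃ h : ↥(svOrbitSet F) ≃ₜ ↥(SFT W),
          ∀ w : ↥(svOrbitSet F),
            ((h ⟨fun i => (w : ℕ → X) (i + 1), fun i => w.2 (i + 1)⟩ : ↥(SFT W)) : ℕ → ↥S)
              = fun i => ((h w : ↥(SFT W)) : ℕ → ↥S) (i + 1) := by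
  classical
  rcases isEmpty_or_nonempty X with hX | hX
  · -- X is empty: both the orbit space and a suitable SFT are empty
    refine ⟨∅, Set.finite_empty, ∅, Set.finite_empty, ?_⟩
    haveI h1 : IsEmpty ↥(svOrbitSet F) := ⟨fun w => hX.false (w.1 0)⟩
    haveI h0 : IsEmpty ↥(∅ : Set ℕ) := Set.instIsEmptyElemEmptyCollection ℕ
    haveI h2 : IsEmpty ↥(SFT (∅ : Set (List ↥(∅ : Set ℕ)))) := ⟨fun s => h0.false (s.1 0)⟩
    have cont1 : Continuous (fun w : ↥(svOrbitSet F) =>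
        (Equiv.equivOfIsEmpty _ _ w : ↥(SFT (∅ : Set (List ↥(∅ : Set ℕ)))))) :=
      continuous_of_isEmpty _
    have cont2 : Continuous ((Equiv.equivOfIsEmpty (↥(svOrbitSet F))
        (↥(SFT (∅ : Set (List ↥(∅ : Set ℕ)))))).symm) := continuous_of_isEmpty _
    exact ⟨⟨Equiv.equivOfIsEmpty _ _, cont1, cont2⟩, fun w => h1.elim w⟩
  -- X nonempty
  obtain ⟨δ, hδu, hδprop⟩ := hexp
  have hgr : IsClosed {p : X × X | p.2 ∈ F p.1} := graph_closed hFcpt hFusc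
  obtain ⟨m, C, hCclopen, hCdisj, hCcover, hCsmall⟩ := exists_small_partition hδu
  set S : Set ℕ := Set.Iio m with hS
  have hSfin : S.Finite := Set.finite_Iio m
  haveI : Finite ↥S := hSfin.to_subtype
  let e : ↥S ≃ Fin m :=
    { toFun := fun a => ⟨a.1, a.2⟩
      invFun := fun j => ⟨j.1, j.2⟩
      left_inv := fun a => rfl
      right_inv := fun j => rfl }
  set D : ↥S → Set X := fun a => C (e a) with hD
  have hDclopen : ∀ a, IsClopen (D a) := fun a => hCclopen _
  have hDdisj : ∀ a b : ↥S, a ≠ b → D a ∩ D b = ∅ :=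
    fun a b hab => hCdisj _ _ (fun h => hab (e.injective h))
  have hDcover : ⋃ a, D a = Set.univ := by
    rw [hD]
    rw [e.surjective.iUnion_comp (fun j => C j)]
    exact hCcover
  have hDsmall : ∀ a, D a ×ˢ D a ⊆ δ := fun a => hCsmall _
  -- the letter map
  have hletter : ∀ x : X, ∃ a : ↥S, x ∈ D a := by
    intro x
    have : x ∈ ⋃ a, D a := hDcover ▸ Set.mem_univ x
    exact Set.mem_iUnion.mp this
  choose c hc using hletter
  have hcu : ∀ (x : X) (a : ↥S), x ∈ D a → a = c x := by
    intro x a ha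
    by_contra hne
    have h0 := hDdisj a (c x) hne
    have : x ∈ D a ∩ D (c x) := ⟨ha, hc x⟩
    rw [h0] at this
    exact this
  -- the cover by the pieces and the shadowing cover
  have hUfoc : IsFOC (Set.range D) := by
    refine ⟨Set.finite_range D, ?_, ?_⟩
    · rintro G ⟨a, rfl⟩; exact (hDclopen a).isOpen
    · rw [Set.sUnion_range]; exact hDcover
  obtain ⟨V, hVfoc, hVshad⟩ := hshad (Set.range D) hUfoc
  obtain ⟨n, hn⟩ := exists_uniform_n hFne hgr hδprop D
    (fun a => (hDclopen a).isClosed) hDsmall hVfoc.2.1 hVfoc.2.2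
  -- the forbidden words
  set Allowed : List ↥S → Prop :=
    fun u => ∃ w, IsSVOrbit F w ∧ ∀ j : Fin u.length, w j ∈ D (u.get j) with hAllowed
  set W : Set (List ↥S) := {u | u.length = n + 2 ∧ ¬ Allowed u} with hW
  have hWfin : W.Finite := (List.finite_length_eq ↥S (n + 2)).subset fun u hu => hu.1
  -- the itinerary map
  set ii : ↥(svOrbitSet F) → (ℕ → ↥S) := fun w i => c (w.1 i) with hii
  have hSFT : ∀ w : ↥(svOrbitSet F), ii w ∈ SFT W := by
    rintro w u ⟨hulen, hna⟩ k hocc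
    refine hna ⟨fun i => w.1 (k + i), fun i => ?_, fun j => ?_⟩
    · show w.1 (k + (i + 1)) ∈ F (w.1 (k + i))
      have := w.2 (k + i)
      rwa [show k + (i + 1) = k + i + 1 from (Nat.add_assoc k i 1).symm]
    · show w.1 (k + (j : ℕ)) ∈ D (u.get j)
      have hj := hocc j
      rw [← hj]
      exact hc _
  have hinj : Function.Injective ii := by
    intro w w' hww
    apply Subtype.ext; funext k
    have h1 : IsSVOrbit F (fun i => w.1 (k + i)) := by
      intro i
      show w.1 (k + (i + 1)) ∈ F (w.1 (k + i))
      have := w.2 (k + i)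
      rwa [show k + (i + 1) = k + i + 1 from (Nat.add_assoc k i 1).symm]
    have h2 : IsSVOrbit F (fun i => w'.1 (k + i)) := by
      intro i
      show w'.1 (k + (i + 1)) ∈ F (w'.1 (k + i))
      have := w'.2 (k + i)
      rwa [show k + (i + 1) = k + i + 1 from (Nat.add_assoc k i 1).symm]
    have hδclose : ∀ i, ((fun i => w.1 (k + i)) i, (fun i => w'.1 (k + i)) i) ∈ δ := by
      intro i
      have hci : c (w.1 (k + i)) = c (w'.1 (k + i)) := congrFun hww (k + i)
      refine hDsmall (c (w.1 (k + i))) ⟨hc _, ?_⟩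
      show w'.1 (k + i) ∈ D (c (w.1 (k + i)))
      rw [hci]
      exact hc _
    have := hδprop _ _ h1 h2 hδclose
    simpa using this
  have hsurj : ∀ s : ℕ → ↥S, s ∈ SFT W → ∃ w : ↥(svOrbitSet F), ii w = s := by
    intro s hs
    have hall : ∀ k : ℕ, ∃ w : ℕ → X, IsSVOrbit F w ∧ ∀ j ≤ n + 1, w j ∈ D (s (k + j)) := by
      intro k
      have hocc : OccursIn (List.ofFn fun j : Fin (n + 2) => s (k + (j : ℕ))) s k := by
        intro j
        simp only [List.get_ofFn, Fin.coe_cast]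
      have hlen : (List.ofFn fun j : Fin (n + 2) => s (k + (j : ℕ))).length = n + 2 :=
        List.length_ofFn
      have hnotW : (List.ofFn fun j : Fin (n + 2) => s (k + (j : ℕ))) ∉ W :=
        fun huW => hs _ huW k hocc
      have hAll : Allowed (List.ofFn fun j : Fin (n + 2) => s (k + (j : ℕ))) := by
        by_contra hna
        exact hnotW ⟨hlen, hna⟩
      obtain ⟨w, hw, hwm⟩ := hAll
      refine ⟨w, hw, fun j hj => ?_⟩
      have hj2 : j < (List.ofFn fun j : Fin (n + 2) => s (k + (j : ℕ))).length := by
        rw [hlen]; omega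
      have hval := hwm ⟨j, hj2⟩
      simp only [List.get_ofFn, Fin.coe_cast] at hval
      exact hval
    choose wk hwk hwkm using hall
    set x : ℕ → X := fun k => wk k 0 with hx
    have hpseudo : IsSVPseudoOrbit F V x := by
      intro k
      obtain ⟨W', hW'V, hW'sub⟩ := hn (fun i => s (k + 1 + i))
      refine ⟨W', hW'V, ⟨wk k 1, hwk k 0, ?_⟩, ?_⟩
      · apply hW'sub
        have : (fun i => wk k (1 + i)) 0 ∈ tupleDisc F n (fun i => D (s (k + 1 + i))) := by
          apply chain_mem_tupleDisc n _ (fun i => wk k (1 + i))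
          · intro i hi
            show wk k (1 + (i + 1)) ∈ F (wk k (1 + i))
            have := hwk k (1 + i)
            rwa [show 1 + (i + 1) = 1 + i + 1 from (Nat.add_assoc 1 i 1).symm]
          · intro i hi
            show wk k (1 + i) ∈ D (s (k + 1 + i))
            have := hwkm k (1 + i) (by omega)
            rwa [show k + (1 + i) = k + 1 + i from (Nat.add_assoc k 1 i).symm] at this
        simpa using this
      · apply hW'sub
        have : (wk (k + 1)) 0 ∈ tupleDisc F n (fun i => D (s (k + 1 + i))) := by
          apply chain_mem_tupleDisc n _ (wk (k + 1))
          · intro i _; exact hwk (k + 1) i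
          · intro i hi
            show wk (k + 1) i ∈ D (s (k + 1 + i))
            exact hwkm (k + 1) i (by omega)
        exact this
    obtain ⟨z, hz, hshadow⟩ := hVshad x hpseudo
    refine ⟨⟨z, hz⟩, ?_⟩
    funext k
    obtain ⟨G, hGU, hxG, hzG⟩ := hshadow k
    obtain ⟨b, rfl⟩ := hGU
    have hxk : x k ∈ D (s k) := by
      have := hwkm k 0 (by omega)
      simpa using this
    have hbs : b = s k := by
      by_contra hne
      have h0 := hDdisj b (s k) hne
      have : x k ∈ D b ∩ D (s k) := ⟨hxG, hxk⟩
      rw [h0] at this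
      exact this
    exact (hcu (z k) (s k) (hbs ▸ hzG)).symm
  -- assemble the homeomorphism
  let ii' : ↥(svOrbitSet F) → ↥(SFT W) := fun w => ⟨ii w, hSFT w⟩
  have hbij : Function.Bijective ii' := by
    constructor
    · intro w w' h; exact hinj (congrArg Subtype.val h)
    · rintro ⟨s, hs⟩
      obtain ⟨w, hw⟩ := hsurj s hs
      exact ⟨w, Subtype.ext hw⟩
  have hOrbClosed : IsClosed (svOrbitSet F) := by
    have : svOrbitSet F =
        ⋂ i, (fun w : ℕ → X => (w i, w (i + 1))) ⁻¹' {p : X × X | p.2 ∈ F p.1} := by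
      ext w; simp [svOrbitSet, Set.mem_iInter]
    rw [this]
    exact isClosed_iInter fun i =>
      IsClosed.preimage ((continuous_apply i).prodMk (continuous_apply (i + 1))) hgr
  haveI : CompactSpace ↥(svOrbitSet F) := isCompact_iff_compactSpace.mp hOrbClosed.isCompact
  have hcont : Continuous ii' := by
    apply Continuous.subtype_mk
    apply continuous_pi
    intro i
    rw [continuous_discrete_rng]
    intro a
    have : (fun w : ↥(svOrbitSet F) => c (w.1 i)) ⁻¹' {a} =
        (fun w : ↥(svOrbitSet F) => w.1 i) ⁻¹' (D a) := by
      ext w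
      simp only [Set.mem_preimage, Set.mem_singleton_iff]
      constructor
      · rintro rfl; exact hc _
      · intro hw; exact (hcu _ _ hw).symm
    show IsOpen ((fun w : ↥(svOrbitSet F) => c (w.1 i)) ⁻¹' {a})
    rw [this]
    exact ((continuous_apply i).comp continuous_subtype_val).isOpen_preimage _ (hDclopen a).isOpen
  let E : ↥(svOrbitSet F) ≃ ↥(SFT W) := Equiv.ofBijective ii' hbij
  have hEcont : Continuous E := hcont
  refine ⟨S, hSfin, W, hWfin, hEcont.homeoOfEquivCompactToT2, fun w => ?_⟩
  rfl
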